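/- There exists an absolute constant c > 0 such that for every ε ∈ (0,1), every δ > 0 with δ² ≤ log(1 + ε/(1−ε)), and every positive integer n, the following holds. There exist probability distributions Q₁ and Q₂ on ℝ ∪ {⊥} such that: (i) Q₁ is an ε-corrupted version of N(−δ/2,1) and Q₂ is an ε-corrupted version of N(δ/2,1); and (ii) the total variation distance between the n-fold product measures satisfies D_TV(Q₁^⊗n, Q₂^⊗n) ≤ (n/(1−ε))·exp(−c·((1/δ)·log(1 + ε/(1−ε)))²). -/

import Mathlib

open MeasureTheory

/-- Measurable space structure on `Option α`: a set is measurable iff its preimage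
under `some` is measurable. -/
instance optionMeasurableSpace {α : Type*} [m : MeasurableSpace α] :
    MeasurableSpace (Option α) := m.map some

/-- The probability density function of the standard Gaussian `N(0,1)`. -/
noncomputable def gaussPDF (x : ℝ) : ℝ := Real.exp (-x ^ 2 / 2) / Real.sqrt (2 * Real.pi)

/-- `Q` is an `ε`-corrupted version (realizable `ε`-contamination model) of the
distribution on `ℝ` with density `p`: there is a measurable `f` with
`(1−ε)·p ≤ f ≤ p` such that `Q` assigns mass `∫_A f` to every measurable `A ⊆ ℝ`
(embedded via `some`) and mass `1 − ∫ f` to `{⊥}` (i.e. `{none}`). -/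
def IsCorruptedVersion (ε : ℝ) (p : ℝ → ℝ) (Q : Measure (Option ℝ)) : Prop :=
  IsProbabilityMeasure Q ∧
  ∃ f : ℝ → ℝ, Measurable f ∧ (∀ x : ℝ, (1 - ε) * p x ≤ f x ∧ f x ≤ p x) ∧
    (∀ A : Set ℝ, MeasurableSet A → Q (Option.some '' A) = ENNReal.ofReal (∫ x in A, f x)) ∧
    Q {none} = ENNReal.ofReal (1 - ∫ x : ℝ, f x)

/-- Total variation distance between two measures: the supremum over measurable sets of
the absolute difference of the assigned masses. -/
noncomputable def tvDist {α : Type*} [MeasurableSpace α] (P Q : Measure α) : ℝ :=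
  ⨆ s : {s : Set α // MeasurableSet s}, |(P s).toReal - (Q s).toReal|

open scoped ENNReal

section Aux

open Real Set MeasureTheory
open scoped ENNReal

lemma measurable_some' {α : Type*} [MeasurableSpace α] :
    Measurable (Option.some : α → Option α) := fun _ hs => hs

lemma measurableSet_none' {α : Type*} [MeasurableSpace α] :
    MeasurableSet ({none} : Set (Option α)) := by
  show MeasurableSet (Option.some ⁻¹' ({none} : Set (Option α)))
  have : (Option.some ⁻¹' ({none} : Set (Option α))) = ∅ := by ext x; simp
  rw [this]; exact MeasurableSet.empty

lemma measurableSet_some_image {α : Type*} [MeasurableSpace α] {A : Set α}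
    (hA : MeasurableSet A) : MeasurableSet (Option.some '' A) := by
  show MeasurableSet (Option.some ⁻¹' (Option.some '' A))
  rwa [Set.preimage_image_eq _ (Option.some_injective α)]

lemma gaussPDF_nonneg (x : ℝ) : 0 ≤ gaussPDF x :=
  div_nonneg (Real.exp_pos _).le (Real.sqrt_nonneg _)

lemma continuous_gaussPDF : Continuous gaussPDF := by
  unfold gaussPDF; fun_prop

lemma gaussPDF_eq (x : ℝ) :
    gaussPDF x = Real.exp (-(1/2) * x ^ 2) / Real.sqrt (2 * π) := by
  rw [gaussPDF]
  congr 1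
  exact congrArg Real.exp (by ring)

lemma integrable_gaussPDF : Integrable gaussPDF := by
  have h : Integrable (fun x : ℝ => Real.exp (-(1/2) * x ^ 2)) :=
    integrable_exp_neg_mul_sq (by norm_num)
  exact (h.div_const _).congr (Filter.Eventually.of_forall fun x => (gaussPDF_eq x).symm)

lemma integral_gaussPDF : ∫ x : ℝ, gaussPDF x = 1 := by
  have h : ∫ x : ℝ, Real.exp (-(1/2) * x ^ 2) = Real.sqrt (2 * π) := by
    rw [integral_gaussian, show (π / (1/2) : ℝ) = 2 * π by ring]
  calc ∫ x : ℝ, gaussPDF x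
      = ∫ x : ℝ, Real.exp (-(1/2) * x ^ 2) / Real.sqrt (2 * π) := by
        simp_rw [gaussPDF_eq]
    _ = 1 := by rw [integral_div, h, div_self (by positivity)]

lemma gaussPDF_neg (x : ℝ) : gaussPDF (-x) = gaussPDF x := by
  rw [gaussPDF, gaussPDF, neg_sq]

lemma setIntegral_Iic_comp_add (f : ℝ → ℝ) (b c : ℝ) :
    ∫ x in Iic b, f (x + c) = ∫ x in Iic (b + c), f x := by
  have e : MeasurableEmbedding (fun x : ℝ => x + c) :=
    (Homeomorph.addRight c).isClosedEmbedding.measurableEmbedding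
  have mp : MeasurePreserving (fun x : ℝ => x + c) volume volume :=
    measurePreserving_add_right volume c
  have hs : Iic b = (fun x : ℝ => x + c) ⁻¹' Iic (b + c) := by
    ext x; simp
  rw [hs, mp.setIntegral_preimage_emb e]

lemma gauss_tail {a : ℝ} (ha : 0 ≤ a) :
    ∫ x in Iic (-a), gaussPDF x ≤ Real.exp (-a ^ 2 / 2) := by
  set g : ℝ → ℝ := fun x =>
    Real.exp (-(1/2) * (x + a) ^ 2) * (Real.exp (-a ^ 2 / 2) / Real.sqrt (2 * π)) with hg
  have hgi : Integrable g :=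
    ((integrable_exp_neg_mul_sq (by norm_num : (0:ℝ) < 1/2)).comp_add_right a).mul_const _
  have hle : ∀ x ∈ Iic (-a), gaussPDF x ≤ g x := by
    intro x hx
    have hx' : x + a ≤ 0 := by
      have : x ≤ -a := hx
      linarith
    have key : -(1/2) * x ^ 2 ≤ -(1/2) * (x + a) ^ 2 + (-a ^ 2 / 2) := by
      nlinarith [mul_nonneg ha (neg_nonneg.2 hx')]
    rw [gaussPDF_eq, hg]
    have h2 : Real.exp (-(1/2) * x ^ 2)
        ≤ Real.exp (-(1/2) * (x + a) ^ 2) * Real.exp (-a ^ 2 / 2) := by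
      rw [← Real.exp_add]; exact Real.exp_le_exp.2 key
    calc Real.exp (-(1/2) * x ^ 2) / Real.sqrt (2 * π)
        ≤ (Real.exp (-(1/2) * (x + a) ^ 2) * Real.exp (-a ^ 2 / 2)) / Real.sqrt (2 * π) := by
          apply div_le_div_of_nonneg_right h2 ?_
          · positivity
      _ = Real.exp (-(1/2) * (x + a) ^ 2) * (Real.exp (-a ^ 2 / 2) / Real.sqrt (2 * π)) := by
          ring
  have step1 : ∫ x in Iic (-a), gaussPDF x ≤ ∫ x in Iic (-a), g x :=
    setIntegral_mono_on integrable_gaussPDF.integrableOn hgi.integrableOn measurableSet_Iic hle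
  have step2 : ∫ x in Iic (-a), g x ≤ ∫ x, g x :=
    setIntegral_le_integral hgi (Filter.Eventually.of_forall fun x => by
      rw [hg]; positivity)
  have step3 : ∫ x, g x = Real.exp (-a ^ 2 / 2) := by
    rw [hg]
    rw [integral_mul_const]
    rw [integral_add_right_eq_self (fun x : ℝ => Real.exp (-(1/2) * x ^ 2)) a]
    rw [integral_gaussian, show (π / (1/2) : ℝ) = 2 * π by ring]
    rw [mul_div_assoc']
    rw [mul_comm, mul_div_assoc, div_self (by positivity), mul_one]
  linarith

lemma pi_mono' {ι : Type*} [Fintype ι] {α : ι → Type*} [∀ i, MeasurableSpace (α i)]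
    (μ ν : ∀ i, Measure (α i)) (h : ∀ i, μ i ≤ ν i) :
    Measure.pi μ ≤ Measure.pi ν := by
  refine Measure.le_iff.2 fun s hs => ?_
  rw [Measure.pi_def, Measure.pi_def, toMeasure_apply _ _ hs, toMeasure_apply _ _ hs]
  have hmono : OuterMeasure.pi (fun i => (μ i).toOuterMeasure)
      ≤ OuterMeasure.pi (fun i => (ν i).toOuterMeasure) := by
    rw [OuterMeasure.le_pi]
    intro t _
    refine (OuterMeasure.pi_pi_le _ t).trans ?_
    refine Finset.prod_le_prod' fun i _ => ?_
    exact Measure.le_iff'.1 (h i) (t i)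
  exact hmono _

lemma tv_le_one_sub {α : Type*} [MeasurableSpace α] (ν P Q : Measure α)
    [IsProbabilityMeasure P] [IsProbabilityMeasure Q] [IsFiniteMeasure ν]
    (hP : ν ≤ P) (hQ : ν ≤ Q) :
    tvDist P Q ≤ 1 - (ν Set.univ).toReal := by
  rw [tvDist]
  refine ciSup_le fun ⟨s, hs⟩ => ?_
  have hPs : (ν s).toReal ≤ (P s).toReal :=
    ENNReal.toReal_mono (measure_ne_top _ _) (Measure.le_iff'.1 hP s)
  have hPsc : (ν sᶜ).toReal ≤ (P sᶜ).toReal :=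
    ENNReal.toReal_mono (measure_ne_top _ _) (Measure.le_iff'.1 hP sᶜ)
  have hQs : (ν s).toReal ≤ (Q s).toReal :=
    ENNReal.toReal_mono (measure_ne_top _ _) (Measure.le_iff'.1 hQ s)
  have hQsc : (ν sᶜ).toReal ≤ (Q sᶜ).toReal :=
    ENNReal.toReal_mono (measure_ne_top _ _) (Measure.le_iff'.1 hQ sᶜ)
  have hP1 : (P s).toReal + (P sᶜ).toReal = 1 := by
    rw [← ENNReal.toReal_add (measure_ne_top _ _) (measure_ne_top _ _),
      measure_add_measure_compl hs, measure_univ, ENNReal.toReal_one]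
  have hQ1 : (Q s).toReal + (Q sᶜ).toReal = 1 := by
    rw [← ENNReal.toReal_add (measure_ne_top _ _) (measure_ne_top _ _),
      measure_add_measure_compl hs, measure_univ, ENNReal.toReal_one]
  have hν1 : (ν s).toReal + (ν sᶜ).toReal = (ν Set.univ).toReal := by
    rw [← ENNReal.toReal_add (measure_ne_top _ _) (measure_ne_top _ _),
      measure_add_measure_compl hs]
  rw [abs_le]
  constructor <;> linarith

noncomputable def mkQ (g : ℝ → ℝ) (c : ℝ≥0∞) : Measure (Option ℝ) :=
  ((volume : Measure ℝ).withDensity (fun x => ENNReal.ofReal (g x))).map Option.some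
    + c • Measure.dirac (none : Option ℝ)

lemma mkQ_some_image (g : ℝ → ℝ) (c : ℝ≥0∞) (hgi : Integrable g) (hg0 : ∀ x, 0 ≤ g x)
    {A : Set ℝ} (hA : MeasurableSet A) :
    mkQ g c (Option.some '' A) = ENNReal.ofReal (∫ x in A, g x) := by
  rw [mkQ, Measure.add_apply,
    Measure.map_apply measurable_some' (measurableSet_some_image hA),
    Set.preimage_image_eq _ (Option.some_injective ℝ), withDensity_apply _ hA,
    Measure.smul_apply, Measure.dirac_apply' _ (measurableSet_some_image hA)]
  have hnone : (none : Option ℝ) ∉ Option.some '' A := by simp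
  rw [Set.indicator_of_notMem hnone, smul_zero, add_zero]
  exact (ofReal_integral_eq_lintegral_ofReal hgi.integrableOn
    (Filter.Eventually.of_forall fun x => hg0 x)).symm

lemma mkQ_none (g : ℝ → ℝ) (c : ℝ≥0∞) : mkQ g c {none} = c := by
  rw [mkQ, Measure.add_apply, Measure.map_apply measurable_some' measurableSet_none']
  have h1 : (Option.some ⁻¹' ({none} : Set (Option ℝ))) = ∅ := by ext x; simp
  rw [h1, measure_empty, Measure.smul_apply,
    Measure.dirac_apply' _ measurableSet_none',
    Set.indicator_of_mem (by simp : (none : Option ℝ) ∈ ({none} : Set (Option ℝ)))]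
  simp

lemma mkQ_univ (g : ℝ → ℝ) (c : ℝ≥0∞) (hgi : Integrable g) (hg0 : ∀ x, 0 ≤ g x) :
    mkQ g c Set.univ = ENNReal.ofReal (∫ x, g x) + c := by
  rw [mkQ, Measure.add_apply, Measure.map_apply measurable_some' MeasurableSet.univ,
    Set.preimage_univ, withDensity_apply _ MeasurableSet.univ, Measure.restrict_univ,
    Measure.smul_apply, measure_univ, smul_eq_mul, mul_one]
  congr 1
  exact (ofReal_integral_eq_lintegral_ofReal hgi
    (Filter.Eventually.of_forall fun x => hg0 x)).symm

lemma mkQ_mono (g g' : ℝ → ℝ) (c c' : ℝ≥0∞) (hg : ∀ x, g x ≤ g' x) (hc : c ≤ c') :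
    mkQ g c ≤ mkQ g' c' := by
  refine add_le_add (Measure.map_mono ?_ measurable_some') ?_
  · exact withDensity_mono (Filter.Eventually.of_forall fun x => ENNReal.ofReal_le_ofReal (hg x))
  · refine Measure.le_iff'.2 fun s => ?_
    simp only [Measure.smul_apply, smul_eq_mul]
    exact mul_le_mul' hc le_rfl

end Aux

set_option maxHeartbeats 1000000 in
/-- There is an absolute constant `c > 0` such that for every `ε ∈ (0,1)`, every `δ > 0`
with `δ² ≤ log(1 + ε/(1−ε))`, and every `n ≥ 1`, there exist `ε`-corrupted versions `Q₁`
of `N(−δ/2,1)` and `Q₂` of `N(δ/2,1)` with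
`D_TV(Q₁^⊗n, Q₂^⊗n) ≤ (n/(1−ε))·exp(−c·((1/δ)·log(1 + ε/(1−ε)))²)`. -/
theorem stmt7 :
    ∃ c : ℝ, 0 < c ∧
      ∀ (ε δ : ℝ) (n : ℕ), ε ∈ Set.Ioo (0 : ℝ) 1 → 0 < δ →
        δ ^ 2 ≤ Real.log (1 + ε / (1 - ε)) → 0 < n →
        ∃ Q₁ Q₂ : Measure (Option ℝ),
          IsCorruptedVersion ε (fun x => gaussPDF (x + δ / 2)) Q₁ ∧
          IsCorruptedVersion ε (fun x => gaussPDF (x - δ / 2)) Q₂ ∧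
          tvDist (Measure.pi fun _ : Fin n => Q₁) (Measure.pi fun _ : Fin n => Q₂) ≤
            ((n : ℝ) / (1 - ε)) *
              Real.exp (-c * ((1 / δ) * Real.log (1 + ε / (1 - ε))) ^ 2) := by
  refine ⟨1/8, by norm_num, ?_⟩
  intro ε δ n hε hδ hL2 hn
  obtain ⟨hε0, hε1⟩ := hε
  have h1ε : 0 < 1 - ε := by linarith
  set L := Real.log (1 + ε / (1 - ε)) with hLdef
  have hbase : (1:ℝ) + ε / (1 - ε) = (1 - ε)⁻¹ := by field_simp; ring
  have hexpL : Real.exp L = (1 - ε)⁻¹ := by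
    rw [hLdef, hbase, Real.exp_log (by positivity)]
  have hexpnegL : Real.exp (-L) = 1 - ε := by rw [Real.exp_neg, hexpL, inv_inv]
  have h1inv : 1 < (1 - ε)⁻¹ := by
    nlinarith [inv_pos.2 h1ε, mul_inv_cancel₀ (ne_of_gt h1ε)]
  have hL0 : 0 < L := by rw [hLdef, hbase]; exact Real.log_pos h1inv
  set T := (1/δ) * L with hTdef
  have hTL : T = L / δ := by rw [hTdef]; ring
  have hT0 : 0 < T := by rw [hTL]; positivity
  have hδT : δ ≤ T := by rw [hTL, le_div_iff₀ hδ]; nlinarith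
  have hTδ : T * δ = L := by rw [hTL]; field_simp
  set p₁ : ℝ → ℝ := fun x => gaussPDF (x + δ/2) with hp₁
  set p₂ : ℝ → ℝ := fun x => gaussPDF (x - δ/2) with hp₂
  set m : ℝ → ℝ := fun x => min (p₁ x) (p₂ x) with hm
  set f₁ : ℝ → ℝ := fun x => max ((1 - ε) * p₁ x) (m x) with hf₁
  set f₂ : ℝ → ℝ := fun x => max ((1 - ε) * p₂ x) (m x) with hf₂
  have hp₁0 : ∀ x, 0 ≤ p₁ x := fun x => gaussPDF_nonneg _
  have hp₂0 : ∀ x, 0 ≤ p₂ x := fun x => gaussPDF_nonneg _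
  have hp₁i : Integrable p₁ := integrable_gaussPDF.comp_add_right (δ/2)
  have hp₂i : Integrable p₂ := by
    have h := integrable_gaussPDF.comp_add_right (-(δ/2))
    simp only [hp₂, sub_eq_add_neg]
    exact h
  have hp₁1 : ∫ x, p₁ x = 1 := by
    simp only [hp₁]
    rw [integral_add_right_eq_self gaussPDF (δ/2), integral_gaussPDF]
  have hp₁c : Continuous p₁ := continuous_gaussPDF.comp (continuous_id.add continuous_const)
  have hp₂c : Continuous p₂ := continuous_gaussPDF.comp (continuous_id.sub continuous_const)
  have hmc : Continuous m := hp₁c.min hp₂c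
  have hf₁c : Continuous f₁ := (continuous_const.mul hp₁c).max hmc
  have hf₂c : Continuous f₂ := (continuous_const.mul hp₂c).max hmc
  have hm0 : ∀ x, 0 ≤ m x := fun x => le_min (hp₁0 x) (hp₂0 x)
  have hmle₁ : ∀ x, m x ≤ p₁ x := fun x => min_le_left _ _
  have hmle₂ : ∀ x, m x ≤ p₂ x := fun x => min_le_right _ _
  have hf₁b : ∀ x, (1 - ε) * p₁ x ≤ f₁ x ∧ f₁ x ≤ p₁ x := fun x =>
    ⟨le_max_left _ _, max_le (by nlinarith [hp₁0 x]) (hmle₁ x)⟩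
  have hf₂b : ∀ x, (1 - ε) * p₂ x ≤ f₂ x ∧ f₂ x ≤ p₂ x := fun x =>
    ⟨le_max_left _ _, max_le (by nlinarith [hp₂0 x]) (hmle₂ x)⟩
  have hf₁0 : ∀ x, 0 ≤ f₁ x := fun x => (hm0 x).trans (le_max_right _ _)
  have hf₂0 : ∀ x, 0 ≤ f₂ x := fun x => (hm0 x).trans (le_max_right _ _)
  have hmi : Integrable m := hp₁i.mono' hmc.aestronglyMeasurable
    (Filter.Eventually.of_forall fun x => by
      rw [Real.norm_eq_abs, abs_of_nonneg (hm0 x)]; exact hmle₁ x)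
  have hf₁i : Integrable f₁ := hp₁i.mono' hf₁c.aestronglyMeasurable
    (Filter.Eventually.of_forall fun x => by
      rw [Real.norm_eq_abs, abs_of_nonneg (hf₁0 x)]; exact (hf₁b x).2)
  have hf₂i : Integrable f₂ := hp₂i.mono' hf₂c.aestronglyMeasurable
    (Filter.Eventually.of_forall fun x => by
      rw [Real.norm_eq_abs, abs_of_nonneg (hf₂0 x)]; exact (hf₂b x).2)
  have hif₁le : ∫ x, f₁ x ≤ 1 := hp₁1 ▸ integral_mono hf₁i hp₁i fun x => (hf₁b x).2
  have hif₁0 : 0 ≤ ∫ x, f₁ x := integral_nonneg hf₁0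
  have hif₂0 : 0 ≤ ∫ x, f₂ x := integral_nonneg hf₂0
  -- symmetry
  have hp₁neg : ∀ x, p₁ (-x) = p₂ x := fun x => by
    simp only [hp₁, hp₂]
    rw [show -x + δ/2 = -(x - δ/2) by ring, gaussPDF_neg]
  have hp₂neg : ∀ x, p₂ (-x) = p₁ x := fun x => by
    have h := hp₁neg (-x); rw [neg_neg] at h; exact h.symm
  have hmneg : ∀ x, m (-x) = m x := fun x => by
    simp only [hm]; rw [hp₁neg, hp₂neg, min_comm]
  have hf₂neg : ∀ x, f₂ x = f₁ (-x) := fun x => by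
    simp only [hf₁, hf₂]; rw [hp₁neg, hmneg]
  have hieq : ∫ x, f₂ x = ∫ x, f₁ x := by
    simp_rw [hf₂neg]; exact integral_neg_eq_self f₁ volume
  have hif₂le : ∫ x, f₂ x ≤ 1 := by rw [hieq]; exact hif₁le
  -- region bound
  have hregion : ∀ x, f₁ x - m x ≤ Set.indicator (Set.Iic (-T)) p₁ x := by
    intro x
    by_cases hx : x ≤ -T
    · rw [Set.indicator_of_mem (Set.mem_Iic.2 hx)]
      have h1 := hm0 x; have h2 := (hf₁b x).2; linarith
    · rw [Set.indicator_of_notMem (by simpa using hx)]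
      push_neg at hx
      have hratio : p₂ x = p₁ x * Real.exp (x * δ) := by
        have hAB : -(x - δ/2) ^ 2 / 2 = -(x + δ/2) ^ 2 / 2 + x * δ := by ring
        simp only [hp₁, hp₂, gaussPDF]
        rw [div_mul_eq_mul_div, ← Real.exp_add, hAB]
      have hmul := mul_lt_mul_of_pos_right hx hδ
      have hexp : (1 - ε) ≤ Real.exp (x * δ) := by
        rw [← hexpnegL]
        apply Real.exp_le_exp.2
        nlinarith [hTδ]
      have hle2 : (1 - ε) * p₁ x ≤ p₂ x := by
        rw [hratio]; nlinarith [hp₁0 x]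
      have ha : (1 - ε) * p₁ x ≤ p₁ x := by nlinarith [hp₁0 x]
      have hfeq : f₁ x = m x := by
        rw [hf₁]
        show max ((1 - ε) * p₁ x) (m x) = m x
        exact max_eq_right (le_min ha hle2)
      rw [hfeq]; simp
  have hTailnn : (0:ℝ) ≤ T - δ/2 := by linarith
  have htail : (∫ x, (f₁ x - m x)) ≤ Real.exp (-(1/8) * T^2) := by
    have h1 : (∫ x, (f₁ x - m x)) ≤ ∫ x, Set.indicator (Set.Iic (-T)) p₁ x :=
      integral_mono (hf₁i.sub hmi) (hp₁i.indicator measurableSet_Iic) hregion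
    have h2 : (∫ x, Set.indicator (Set.Iic (-T)) p₁ x) = ∫ x in Set.Iic (-T), p₁ x :=
      integral_indicator measurableSet_Iic
    have h3 : (∫ x in Set.Iic (-T), p₁ x) = ∫ x in Set.Iic (-(T - δ/2)), gaussPDF x := by
      simp only [hp₁]
      rw [setIntegral_Iic_comp_add gaussPDF (-T) (δ/2),
        show -T + δ/2 = -(T - δ/2) by ring]
    have h4 := gauss_tail hTailnn
    have h5 : Real.exp (-(T - δ/2) ^ 2 / 2) ≤ Real.exp (-(1/8) * T^2) := by
      apply Real.exp_le_exp.2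
      have hh : T/2 ≤ T - δ/2 := by linarith
      nlinarith [mul_self_le_mul_self (by linarith : (0:ℝ) ≤ T/2) hh]
    linarith
  -- measures
  set c₁ : ℝ≥0∞ := 1 - ENNReal.ofReal (∫ x, f₁ x) with hc₁
  set c₂ : ℝ≥0∞ := 1 - ENNReal.ofReal (∫ x, f₂ x) with hc₂
  have hc₁₂ : c₁ = c₂ := by rw [hc₁, hc₂, hieq]
  haveI hQ₁p : IsProbabilityMeasure (mkQ f₁ c₁) := ⟨by
    rw [mkQ_univ f₁ c₁ hf₁i hf₁0, hc₁,
      add_tsub_cancel_of_le (ENNReal.ofReal_le_one.2 hif₁le)]⟩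
  haveI hQ₂p : IsProbabilityMeasure (mkQ f₂ c₂) := ⟨by
    rw [mkQ_univ f₂ c₂ hf₂i hf₂0, hc₂,
      add_tsub_cancel_of_le (ENNReal.ofReal_le_one.2 hif₂le)]⟩
  refine ⟨mkQ f₁ c₁, mkQ f₂ c₂, ?_, ?_, ?_⟩
  · refine ⟨hQ₁p, f₁, hf₁c.measurable, hf₁b,
      fun A hA => mkQ_some_image f₁ c₁ hf₁i hf₁0 hA, ?_⟩
    rw [mkQ_none, hc₁, ENNReal.ofReal_sub _ hif₁0, ENNReal.ofReal_one]
  · refine ⟨hQ₂p, f₂, hf₂c.measurable, hf₂b,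
      fun A hA => mkQ_some_image f₂ c₂ hf₂i hf₂0 hA, ?_⟩
    rw [mkQ_none, hc₂, ENNReal.ofReal_sub _ hif₂0, ENNReal.ofReal_one]
  · set ν := mkQ m c₁ with hνdef
    haveI hνfin : IsFiniteMeasure ν := ⟨by
      rw [hνdef, mkQ_univ m c₁ hmi hm0]
      exact ENNReal.add_lt_top.2
        ⟨ENNReal.ofReal_lt_top, lt_of_le_of_lt tsub_le_self ENNReal.one_lt_top⟩⟩
    have hν₁ : ν ≤ mkQ f₁ c₁ :=
      mkQ_mono m f₁ c₁ c₁ (fun x => le_max_right _ _) le_rfl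
    have hν₂ : ν ≤ mkQ f₂ c₂ :=
      mkQ_mono m f₂ c₁ c₂ (fun x => le_max_right _ _) (le_of_eq hc₁₂)
    have hpi₁ : Measure.pi (fun _ : Fin n => ν) ≤ Measure.pi (fun _ => mkQ f₁ c₁) :=
      pi_mono' _ _ fun _ => hν₁
    have hpi₂ : Measure.pi (fun _ : Fin n => ν) ≤ Measure.pi (fun _ => mkQ f₂ c₂) :=
      pi_mono' _ _ fun _ => hν₂
    have htv := tv_le_one_sub (Measure.pi fun _ : Fin n => ν)
      (Measure.pi fun _ => mkQ f₁ c₁) (Measure.pi fun _ => mkQ f₂ c₂) hpi₁ hpi₂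
    set r : ℝ := (ν Set.univ).toReal with hr
    have hνuniv : ((Measure.pi fun _ : Fin n => ν) Set.univ).toReal = r ^ n := by
      rw [Measure.pi_univ, Finset.prod_const, Finset.card_univ, Fintype.card_fin,
        ENNReal.toReal_pow]
    have hr0 : 0 ≤ r := ENNReal.toReal_nonneg
    have hrval : 1 - r = ∫ x, (f₁ x - m x) := by
      have him0 : 0 ≤ ∫ x, m x := integral_nonneg hm0
      have hreq : r = (∫ x, m x) + (1 - ∫ x, f₁ x) := by
        rw [hr, hνdef, mkQ_univ m c₁ hmi hm0, hc₁, ← ENNReal.ofReal_one,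
          ← ENNReal.ofReal_sub _ hif₁0,
          ← ENNReal.ofReal_add him0 (by linarith : (0:ℝ) ≤ 1 - ∫ x, f₁ x)]
        exact ENNReal.toReal_ofReal (by linarith)
      rw [hreq, integral_sub hf₁i hmi]
      ring
    have hber : 1 - r ^ n ≤ (n : ℝ) * (1 - r) := by
      have h' := one_add_mul_le_pow (show (-2:ℝ) ≤ r - 1 by linarith) n
      rw [show (1:ℝ) + (r - 1) = r by ring] at h'
      linarith
    have h1r : 1 - r ≤ Real.exp (-(1/8) * T^2) := by rw [hrval]; exact htail
    have hfinal : (n : ℝ) * (1 - r) ≤ ((n : ℝ) / (1 - ε)) * Real.exp (-(1/8) * T^2) := by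
      have hn0 : (0:ℝ) ≤ (n : ℝ) := Nat.cast_nonneg n
      have he0 : (0:ℝ) ≤ Real.exp (-(1/8) * T^2) := (Real.exp_pos _).le
      have hstep1 : (n : ℝ) * (1 - r) ≤ (n : ℝ) * Real.exp (-(1/8) * T^2) :=
        mul_le_mul_of_nonneg_left h1r hn0
      have hstep2 : (n : ℝ) * Real.exp (-(1/8) * T^2)
          ≤ ((n : ℝ) / (1 - ε)) * Real.exp (-(1/8) * T^2) := by
        refine mul_le_mul_of_nonneg_right ?_ he0
        rw [le_div_iff₀ h1ε]; nlinarith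
      linarith
    calc tvDist (Measure.pi fun _ : Fin n => mkQ f₁ c₁) (Measure.pi fun _ => mkQ f₂ c₂)
        ≤ 1 - ((Measure.pi fun _ : Fin n => ν) Set.univ).toReal := htv
      _ = 1 - r ^ n := by rw [hνuniv]
      _ ≤ (n : ℝ) * (1 - r) := hber
      _ ≤ ((n : ℝ) / (1 - ε)) * Real.exp (-(1/8) * T^2) := hfinal
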